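/- Let α > −1 and 1 < q < p < ∞. Let ω be a weight on the upper half-plane H belonging to 𝔹_{∞,α}, let μ be a positive Borel measure on H, and let Φ be a normalized Young function in the class B_p. Assume that the function K_μ(z) = sup_{I : z ∈ Q_I} μ(Q_I)/|Q_I|_{ω,α} belongs to L^s(H, ω dV_α), where s = p/(p−q). Then there is a constant C > 0 such that for every β ∈ {0, 1/3} and every compactly supported f ∈ L^p(H, ω dV_α), (∫_H (M^{d,β}_{Φ,ω,α} f(z))^q dμ(z))^{1/q} ≤ C (∫_H |f(z)|^p ω(z) dV_α(z))^{1/p}. -/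

import Mathlib

open MeasureTheory Set Filter
open scoped ENNReal NNReal

noncomputable section

/-- The upper half-plane `H = {z : 0 < Im z}`. -/
def UHP : Set ℂ := {z : ℂ | 0 < z.im}

/-- The measure `dV_α = y^α dx dy` supported on the upper half-plane. -/
def Vm (α : ℝ) : Measure ℂ :=
  MeasureTheory.volume.withDensity
    (fun z => if 0 < z.im then ENNReal.ofReal (z.im ^ α) else 0)

/-- The Carleson square `Q_I` attached to the interval `I = (a, b)`. -/
def Qbox (a b : ℝ) : Set ℂ :=
  {z : ℂ | z.re ∈ Set.Ioo a b ∧ z.im ∈ Set.Ioo 0 (b - a)}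

/-- The weighted measure `|E|_{ω,α} = ∫_E ω dV_α` of a set `E`. -/
def wvol (α : ℝ) (ω : ℂ → ℝ) (E : Set ℂ) : ℝ≥0∞ :=
  ∫⁻ z in E, ENNReal.ofReal (ω z) ∂(Vm α)

/-- A weight: a nonnegative locally integrable function on the upper half-plane. -/
def IsWeight (α : ℝ) (ω : ℂ → ℝ) : Prop :=
  Measurable ω ∧ (∀ z, 0 ≤ ω z) ∧ MeasureTheory.LocallyIntegrableOn ω UHP (Vm α)

/-- A normalized Young function: continuous, convex, increasing on `[0,∞)`,
with `Φ 0 = 0`, `Φ 1 = 1` and `Φ t → ∞` as `t → ∞`. -/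
structure IsNormalizedYoung (Φ : ℝ → ℝ) : Prop where
  cont : ContinuousOn Φ (Set.Ici 0)
  convex : ConvexOn ℝ (Set.Ici 0) Φ
  mono : MonotoneOn Φ (Set.Ici 0)
  map_zero : Φ 0 = 0
  map_one : Φ 1 = 1
  tendsto_atTop : Filter.Tendsto Φ Filter.atTop Filter.atTop

/-- The `Δ₂` (doubling) condition with constant `K`. -/
def Delta2 (Φ : ℝ → ℝ) (K : ℝ) : Prop :=
  1 < K ∧ ∀ t : ℝ, 0 ≤ t → Φ (2 * t) ≤ K * Φ t

/-- The class `B_p`: `Δ₂` together with `∫_c^∞ Φ(t)/t^p dt/t < ∞` for some `c > 0`. -/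
def InBp (Φ : ℝ → ℝ) (p : ℝ) : Prop :=
  (∃ K : ℝ, Delta2 Φ K) ∧
    ∃ c : ℝ, 0 < c ∧ (∫⁻ t in Set.Ioi c, ENNReal.ofReal (Φ t / t ^ (p + 1))) < ⊤

/-- The Luxemburg norm `‖f‖_{Q_I, Φ, ω, α}` over the Carleson square of `I = (a,b)`. -/
def luxNorm (α : ℝ) (Φ : ℝ → ℝ) (ω : ℂ → ℝ) (a b : ℝ) (f : ℂ → ℂ) : ℝ≥0∞ :=
  ⨅ (t : ℝ) (_ : 0 < t)
    (_ : (∫⁻ z in Qbox a b, ENNReal.ofReal (Φ (‖f z‖ / t) * ω z) ∂(Vm α)) /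
          wvol α ω (Qbox a b) ≤ 1),
    ENNReal.ofReal t

/-- The maximal function `M_{Φ,ω,α} f`. -/
def maxFn (α : ℝ) (Φ : ℝ → ℝ) (ω : ℂ → ℝ) (f : ℂ → ℂ) (z : ℂ) : ℝ≥0∞ :=
  ⨆ (a : ℝ) (b : ℝ) (_ : z ∈ Qbox a b), luxNorm α Φ ω a b f

/-- The dyadic grid `D^β`, as a set of pairs of endpoints. -/
def dyadicGrid (β : ℝ) : Set (ℝ × ℝ) :=
  {I : ℝ × ℝ | ∃ j m : ℤ, I.1 = (2 : ℝ) ^ j * (m + (-1 : ℝ) ^ j * β) ∧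
    I.2 = (2 : ℝ) ^ j * (m + 1 + (-1 : ℝ) ^ j * β)}

/-- The dyadic maximal function `M^{d,β}_{Φ,ω,α} f`. -/
def dyadicMax (β α : ℝ) (Φ : ℝ → ℝ) (ω : ℂ → ℝ) (f : ℂ → ℂ) (z : ℂ) : ℝ≥0∞ :=
  ⨆ (I : ℝ × ℝ) (_ : I ∈ dyadicGrid β) (_ : z ∈ Qbox I.1 I.2),
    luxNorm α Φ ω I.1 I.2 f

/-- The Hardy–Littlewood maximal function `M_α g` of the upper half-plane. -/
def hlMax (α : ℝ) (g : ℂ → ℝ) (z : ℂ) : ℝ≥0∞ :=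
  ⨆ (a : ℝ) (b : ℝ) (_ : z ∈ Qbox a b),
    (∫⁻ w in Qbox a b, ENNReal.ofReal |g w| ∂(Vm α)) / Vm α (Qbox a b)

/-- The weighted Hardy–Littlewood maximal function `M_{ω,α} f`. -/
def whlMax (α : ℝ) (ω : ℂ → ℝ) (f : ℂ → ℂ) (z : ℂ) : ℝ≥0∞ :=
  ⨆ (a : ℝ) (b : ℝ) (_ : z ∈ Qbox a b),
    (∫⁻ w in Qbox a b, ENNReal.ofReal (‖f w‖ * ω w) ∂(Vm α)) /
      wvol α ω (Qbox a b)

/-- The Békollè–Bonami constant `[ω]_{B_{p,α}}`. -/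
def BBnorm (α p : ℝ) (ω : ℂ → ℝ) : ℝ≥0∞ :=
  ⨆ (a : ℝ) (b : ℝ) (_ : a < b),
    (wvol α ω (Qbox a b) / Vm α (Qbox a b)) *
      ((∫⁻ z in Qbox a b, ENNReal.ofReal (ω z) ^ (1 - p / (p - 1)) ∂(Vm α)) /
          Vm α (Qbox a b)) ^ (p - 1)

/-- Membership in the Békollè–Bonami class `B_{p,α}`. -/
def InBB (α p : ℝ) (ω : ℂ → ℝ) : Prop := BBnorm α p ω < ⊤

/-- Membership in `𝔹_{∞,α} = ⋃_{p>1} B_{p,α}`. -/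
def InBBinfty (α : ℝ) (ω : ℂ → ℝ) : Prop := ∃ p : ℝ, 1 < p ∧ InBB α p ω

/-- The quantity `∫_H |f|^p ω dV_α`. -/
def lpInt (α p : ℝ) (ω : ℂ → ℝ) (f : ℂ → ℂ) : ℝ≥0∞ :=
  ∫⁻ z, ENNReal.ofReal (‖f z‖) ^ p * ENNReal.ofReal (ω z) ∂(Vm α)

/-- The function `K_μ(z) = sup_{I : z ∈ Q_I} μ(Q_I)/|Q_I|_{ω,α}`. -/
def Kmu (α : ℝ) (ω : ℂ → ℝ) (μ : Measure ℂ) (z : ℂ) : ℝ≥0∞ :=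
  ⨆ (a : ℝ) (b : ℝ) (_ : z ∈ Qbox a b), μ (Qbox a b) / wvol α ω (Qbox a b)

/-- `ω` is `α`-doubling with doubling function `φ` and constant `K`. -/
structure AlphaDoubling (α : ℝ) (ω : ℂ → ℝ) (φ : ℝ≥0∞ → ℝ≥0∞) (K : ℝ≥0∞) : Prop where
  mono : Monotone φ
  map_one : φ 1 = 1
  one_le : 1 ≤ K
  bound : ∀ a b : ℝ, ∀ E ⊆ Qbox a b, MeasurableSet E →
    wvol α ω (Qbox a b) / wvol α ω E ≤ K * φ (Vm α (Qbox a b) / Vm α E)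

/-- The complementary (conjugate) Young function `Ψ(s) = sup_{t ≥ 0} (t s − Φ(t))`,
valued in `ℝ≥0∞`. -/
def conjugateYoung (Φ : ℝ → ℝ) (s : ℝ) : ℝ≥0∞ :=
  ⨆ (t : ℝ) (_ : 0 ≤ t), ENNReal.ofReal (t * s - Φ t)

/-- The unweighted Luxemburg norm for an `ℝ≥0∞`-valued Young function. -/
def luxNormE (α : ℝ) (Ψ : ℝ → ℝ≥0∞) (a b : ℝ) (g : ℂ → ℝ) : ℝ≥0∞ :=
  ⨅ (t : ℝ) (_ : 0 < t)
    (_ : (∫⁻ z in Qbox a b, Ψ (|g z| / t) ∂(Vm α)) / Vm α (Qbox a b) ≤ 1),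
    ENNReal.ofReal t

/-- The Békollè–Bonami `B_{∞,α}` constant
`[ω]_{B_{∞,α}} = sup_I |Q_I|_{ω,α}⁻¹ ∫_{Q_I} M_α(ω χ_{Q_I}) dV_α`. -/
def BBinftyNorm (α : ℝ) (ω : ℂ → ℝ) : ℝ≥0∞ :=
  ⨆ (a : ℝ) (b : ℝ) (_ : a < b),
    (∫⁻ z in Qbox a b, hlMax α ((Qbox a b).indicator ω) z ∂(Vm α)) /
      wvol α ω (Qbox a b)

end

noncomputable section Aux
namespace S16

open Complex

/-- Left endpoint of a dyadic interval. -/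
def lep (β : ℝ) (j m : ℤ) : ℝ := (2:ℝ) ^ j * (m + (-1 : ℝ) ^ j * β)

/-- Right endpoint. -/
def rep (β : ℝ) (j m : ℤ) : ℝ := lep β j m + (2:ℝ) ^ j

/-- The dyadic Carleson box. -/
def Qb (β : ℝ) (pr : ℤ × ℤ) : Set ℂ := Qbox (lep β pr.1 pr.2) (rep β pr.1 pr.2)

lemma two_zpow_pos (j : ℤ) : (0:ℝ) < (2:ℝ) ^ j := zpow_pos (by norm_num) j

lemma lep_mono {β : ℝ} {j m m' : ℤ} (h : m ≤ m') : lep β j m ≤ lep β j m' := by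
  unfold lep
  have := two_zpow_pos j
  have : (m : ℝ) ≤ (m' : ℝ) := by exact_mod_cast h
  nlinarith [two_zpow_pos j]

lemma rep_eq (β : ℝ) (j m : ℤ) : rep β j m = lep β j (m + 1) := by
  unfold rep lep; push_cast; ring

/-- Parent: each dyadic interval is contained in one of the next scale. -/
lemma exists_parent {β : ℝ} (hβ : 3 * β = 0 ∨ 3 * β = 1) (j m : ℤ) :
    ∃ m' : ℤ, lep β (j+1) m' ≤ lep β j m ∧ rep β j m ≤ rep β (j+1) m' := by
  have hσ : ((-1 : ℝ) ^ j) = -((-1:ℝ) ^ (j+1)) := by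
    rw [zpow_add_one₀ (by norm_num : (-1:ℝ) ≠ 0)]; ring
  have h2 : ((2:ℝ) ^ (j+1)) = 2 * (2:ℝ) ^ j := by
    rw [zpow_add_one₀ (by norm_num : (2:ℝ) ≠ 0)]; ring
  -- the integer d with (d : ℝ) = 3 * (-1)^(j+1) * β
  obtain ⟨d, hd⟩ : ∃ d : ℤ, (d : ℝ) = 3 * (-1:ℝ)^(j+1) * β := by
    rcases hβ with h | h
    · refine ⟨0, ?_⟩
      have hb : β = 0 := by linarith
      simp [hb]
    · rcases Int.even_or_odd (j+1) with he | ho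
      · refine ⟨1, ?_⟩
        rw [Even.neg_one_zpow he]; push_cast; linarith
      · refine ⟨-1, ?_⟩
        rw [Odd.neg_one_zpow ho]; push_cast; linarith
  refine ⟨(m - d) / 2, ?_, ?_⟩
  · have h1 : 2 * ((m - d) / 2) ≤ m - d := by omega
    have h1R : 2 * (((m - d) / 2 : ℤ) : ℝ) ≤ (m : ℝ) - d := by exact_mod_cast h1
    unfold lep
    rw [h2, hσ]
    have := two_zpow_pos j
    nlinarith [two_zpow_pos j, h1R, hd]
  · have h1 : m - d ≤ 2 * ((m - d) / 2) + 1 := by omega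
    have h1R : (m : ℝ) - d ≤ 2 * (((m - d) / 2 : ℤ) : ℝ) + 1 := by exact_mod_cast h1
    unfold rep lep
    rw [h2, hσ]
    nlinarith [two_zpow_pos j, h1R, hd]

/-- Trichotomy for scales `j` and `j + n`. -/
lemma trichotomy_aux {β : ℝ} (hβ : 3 * β = 0 ∨ 3 * β = 1) :
    ∀ (n : ℕ) (j m m' : ℤ),
      (lep β (j+n) m' ≤ lep β j m ∧ rep β j m ≤ rep β (j+n) m') ∨
      rep β j m ≤ lep β (j+n) m' ∨ rep β (j+n) m' ≤ lep β j m := by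
  intro n
  induction n with
  | zero =>
    intro j m m'
    rcases lt_trichotomy m m' with h | h | h
    · right; left
      rw [rep_eq]
      simpa using lep_mono (β := β) (j := j) (by omega : m + 1 ≤ m')
    · left; subst h; simp [rep]
    · right; right
      rw [rep_eq]
      simpa using lep_mono (β := β) (j := j) (by omega : m' + 1 ≤ m)
  | succ n ih =>
    intro j m m'
    obtain ⟨m₀, hL, hR⟩ := exists_parent hβ j m
    have hcast : (j + 1) + (n : ℤ) = j + ((n : ℕ) + 1 : ℕ) := by push_cast; ring
    have := ih (j+1) m₀ m'
    rw [hcast] at this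
    rcases this with ⟨h1, h2⟩ | h | h
    · left; exact ⟨le_trans h1 hL, le_trans hR h2⟩
    · right; left; calc rep β j m ≤ rep β (j+1) m₀ := hR
        _ = lep β (j+1) m₀ + (2:ℝ)^(j+1) := rfl
        _ ≤ lep β (j + ((n:ℕ)+1:ℕ)) m' := by
            have := two_zpow_pos (j+1); have hl : lep β (j+1) m₀ + (2:ℝ)^(j+1) = rep β (j+1) m₀ := rfl
            rw [hl]; exact h
    · right; right; exact le_trans h (by
        calc lep β (j+1) m₀ ≤ lep β j m := hL)

/-- Trichotomy, general form. -/
lemma trichotomy {β : ℝ} (hβ : 3 * β = 0 ∨ 3 * β = 1) (pr qr : ℤ × ℤ)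
    (hj : pr.1 ≤ qr.1) :
    (lep β qr.1 qr.2 ≤ lep β pr.1 pr.2 ∧ rep β pr.1 pr.2 ≤ rep β qr.1 qr.2) ∨
      rep β pr.1 pr.2 ≤ lep β qr.1 qr.2 ∨ rep β qr.1 qr.2 ≤ lep β pr.1 pr.2 := by
  have hn : qr.1 = pr.1 + ((qr.1 - pr.1).toNat : ℤ) := by omega
  have := trichotomy_aux hβ (qr.1 - pr.1).toNat pr.1 pr.2 qr.2
  rw [← hn] at this
  exact this

end S16
end Aux
noncomputable section Aux2
namespace S16

lemma Qbox_subset {a b a' b' : ℝ} (h1 : a' ≤ a) (h2 : b ≤ b') :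
    Qbox a b ⊆ Qbox a' b' := by
  rintro z ⟨⟨hr1, hr2⟩, hi1, hi2⟩
  exact ⟨⟨lt_of_le_of_lt h1 hr1, lt_of_lt_of_le hr2 h2⟩, hi1, by linarith⟩

lemma Qbox_disjoint {a b a' b' : ℝ} (h : b ≤ a') :
    Disjoint (Qbox a b) (Qbox a' b') := by
  rw [Set.disjoint_left]
  rintro z ⟨⟨_, hr2⟩, _⟩ ⟨⟨hr1', _⟩, _⟩
  linarith

lemma isOpen_Qbox (a b : ℝ) : IsOpen (Qbox a b) := by
  have : Qbox a b = Complex.re ⁻¹' (Set.Ioo a b) ∩ Complex.im ⁻¹' (Set.Ioo 0 (b-a)) := rfl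
  rw [this]
  exact (isOpen_Ioo.preimage Complex.continuous_re).inter
    (isOpen_Ioo.preimage Complex.continuous_im)

lemma measurableSet_Qbox (a b : ℝ) : MeasurableSet (Qbox a b) :=
  (isOpen_Qbox a b).measurableSet

lemma Qb_subset {β : ℝ} {pr qr : ℤ × ℤ}
    (h : lep β qr.1 qr.2 ≤ lep β pr.1 pr.2 ∧ rep β pr.1 pr.2 ≤ rep β qr.1 qr.2) :
    Qb β pr ⊆ Qb β qr := Qbox_subset h.1 h.2

lemma incl_scale {β : ℝ} {pr qr : ℤ × ℤ}
    (h : lep β qr.1 qr.2 ≤ lep β pr.1 pr.2 ∧ rep β pr.1 pr.2 ≤ rep β qr.1 qr.2) :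
    pr.1 ≤ qr.1 := by
  have h2 : (2:ℝ) ^ pr.1 ≤ (2:ℝ) ^ qr.1 := by
    have := h.1; have := h.2
    unfold rep at *
    linarith
  exact (zpow_le_zpow_iff_right₀ (by norm_num : (1:ℝ) < 2)).mp h2

lemma incl_antisymm {β : ℝ} {pr qr : ℤ × ℤ}
    (h : lep β qr.1 qr.2 ≤ lep β pr.1 pr.2 ∧ rep β pr.1 pr.2 ≤ rep β qr.1 qr.2)
    (h' : lep β pr.1 pr.2 ≤ lep β qr.1 qr.2 ∧ rep β qr.1 qr.2 ≤ rep β pr.1 pr.2) :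
    pr = qr := by
  have hj : pr.1 = qr.1 := le_antisymm (incl_scale h) (incl_scale h')
  have hL : lep β pr.1 pr.2 = lep β qr.1 qr.2 := le_antisymm h'.1 h.1
  have hm : pr.2 = qr.2 := by
    unfold lep at hL
    rw [hj] at hL
    have h2 := two_zpow_pos qr.1
    have : (pr.2 : ℝ) = (qr.2 : ℝ) := by
      have := mul_left_cancel₀ (ne_of_gt h2) hL
      linarith
    exact_mod_cast this
  exact Prod.ext hj hm

/-- The covering lemma: if a measure `ρ` is dominated by `∫ g dm` on each dyadic box
of a family, it is dominated on the union. -/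
lemma covering {β : ℝ} (hβ : 3 * β = 0 ∨ 3 * β = 1) (S : Set (ℤ × ℤ))
    (ρ : Measure ℂ) (m' : Measure ℂ) (g : ℂ → ℝ≥0∞)
    (hS : ∀ pr ∈ S, ρ (Qb β pr) ≤ ∫⁻ z in Qb β pr, g z ∂m') :
    ρ (⋃ pr ∈ S, Qb β pr) ≤ ∫⁻ z in ⋃ pr ∈ S, Qb β pr, g z ∂m' := by
  classical
  set incl : ℤ × ℤ → ℤ × ℤ → Prop :=
    fun pr qr => lep β qr.1 qr.2 ≤ lep β pr.1 pr.2 ∧ rep β pr.1 pr.2 ≤ rep β qr.1 qr.2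
    with hincl
  -- bounded-scale approximations
  set SN : ℤ → Set (ℤ × ℤ) := fun N => {pr ∈ S | pr.1 ≤ N} with hSN
  set UN : ℤ → Set ℂ := fun N => ⋃ pr ∈ SN N, Qb β pr with hUN
  have keyN : ∀ N : ℤ, ρ (UN N) ≤ ∫⁻ z in UN N, g z ∂m' := by
    intro N
    set M : Set (ℤ × ℤ) := {qr ∈ SN N | ∀ r ∈ SN N, incl qr r → r = qr} with hM
    -- every element of `SN N` is inside a maximal one
    have hmax : ∀ pr ∈ SN N, ∃ qr ∈ M, incl pr qr := by
      intro pr hpr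
      obtain ⟨js, ⟨⟨q₀, hq₀, hq₀j⟩, hub⟩⟩ :=
        Int.exists_greatest_of_bdd (P := fun j => ∃ q, (q ∈ SN N ∧ incl pr q) ∧ q.1 = j)
          ⟨N, fun z ⟨q, hq, hqj⟩ => hqj ▸ hq.1.2⟩
          ⟨pr.1, pr, ⟨hpr, ⟨le_refl _, le_refl _⟩⟩, rfl⟩
      refine ⟨q₀, ⟨hq₀.1, ?_⟩, hq₀.2⟩
      intro r hr hq₀r
      have hprr : incl pr r := ⟨le_trans hq₀r.1 hq₀.2.1, le_trans hq₀.2.2 hq₀r.2⟩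
      have hrj : r.1 ≤ js := hub r.1 ⟨r, ⟨hr, hprr⟩, rfl⟩
      have hjr : q₀.1 ≤ r.1 := incl_scale hq₀r
      have hLr : lep β r.1 r.2 ≤ lep β q₀.1 q₀.2 := hq₀r.1
      have hRr : rep β q₀.1 q₀.2 ≤ rep β r.1 r.2 := hq₀r.2
      have hjeq : r.1 = q₀.1 := by omega
      -- equal scale + inclusion forces equality
      have h2eq : (2:ℝ) ^ r.1 = (2:ℝ) ^ q₀.1 := by rw [hjeq]
      have : incl r q₀ := by
        constructor
        · unfold rep at hRr
          rw [h2eq] at hRr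
          linarith
        · unfold rep
          rw [h2eq]
          linarith
      exact incl_antisymm this hq₀r
    have hMS : M ⊆ S := fun q hq => hq.1.1
    have hUNM : UN N = ⋃ qr ∈ M, Qb β qr := by
      apply Set.Subset.antisymm
      · refine Set.iUnion₂_subset fun pr hpr => ?_
        obtain ⟨qr, hqr, hi⟩ := hmax pr hpr
        exact (Qb_subset hi).trans (Set.subset_biUnion_of_mem hqr)
      · exact Set.iUnion₂_mono' fun qr hq => ⟨qr, hq.1, le_refl _⟩
    have hdisj : M.PairwiseDisjoint (Qb β) := by
      intro x hx y hy hne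
      simp only [Function.onFun]
      rcases le_total x.1 y.1 with hj | hj
      · rcases trichotomy hβ x y hj with h | h | h
        · exact absurd ((hx.2 y hy.1 h).symm) hne
        · exact Qbox_disjoint h
        · exact (Qbox_disjoint h).symm
      · rcases trichotomy hβ y x hj with h | h | h
        · exact absurd (hy.2 x hx.1 h) hne
        · exact (Qbox_disjoint h).symm
        · exact Qbox_disjoint h
    -- sum up
    have hMc : M.Countable := Set.to_countable M
    calc ρ (UN N) = ρ (⋃ qr ∈ M, Qb β qr) := by rw [hUNM]
      _ ≤ ∑' qr : M, ρ (Qb β qr) := measure_biUnion_le ρ hMc _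
      _ ≤ ∑' qr : M, ∫⁻ z in Qb β qr, g z ∂m' :=
          ENNReal.tsum_le_tsum fun qr => hS qr (hMS qr.2)
      _ = ∫⁻ z in ⋃ qr : M, Qb β qr, g z ∂m' := by
          haveI := hMc.to_subtype
          refine (lintegral_iUnion (fun qr : M => measurableSet_Qbox _ _) ?_ g).symm
          intro i j hij
          exact hdisj i.2 j.2 (fun h => hij (Subtype.ext h))
      _ = ∫⁻ z in ⋃ qr ∈ M, Qb β qr, g z ∂m' := by
          rw [show (⋃ qr : M, Qb β (qr : ℤ × ℤ)) = ⋃ qr ∈ M, Qb β qr from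
            (Set.biUnion_eq_iUnion M fun qr _ => Qb β qr).symm]
      _ = ∫⁻ z in UN N, g z ∂m' := by rw [hUNM]
  -- pass to the limit
  have hUmono : Monotone UN := by
    intro N N' hNN'
    exact Set.iUnion₂_mono' fun pr hpr => ⟨pr, ⟨hpr.1, le_trans hpr.2 hNN'⟩, le_refl _⟩
  have hUnion : (⋃ pr ∈ S, Qb β pr) = ⋃ N : ℤ, UN N := by
    apply Set.Subset.antisymm
    · refine Set.iUnion₂_subset fun pr hpr => ?_
      exact le_trans (Set.subset_biUnion_of_mem (show pr ∈ SN pr.1 from ⟨hpr, le_refl _⟩))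
        (Set.subset_iUnion UN pr.1)
    · refine Set.iUnion_subset fun N => ?_
      refine Set.iUnion₂_subset fun pr hpr => ?_
      exact Set.subset_biUnion_of_mem hpr.1
  rw [hUnion, Directed.measure_iUnion (hUmono.directed_le)]
  apply iSup_le
  intro N
  refine le_trans (keyN N) ?_
  rw [← hUnion]
  exact lintegral_mono_set (by
    rw [hUnion]
    exact Set.subset_iUnion UN N)

end S16
end Aux2
noncomputable section Aux3
namespace S16

variable {Φ : ℝ → ℝ}

/-- Truncated Young function, globally monotone/measurable. -/
def phiT (Φ : ℝ → ℝ) (t : ℝ) : ℝ := Φ (max t 0)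

lemma phiT_monotone (hΦ : IsNormalizedYoung Φ) : Monotone (phiT Φ) := by
  intro s t hst
  exact hΦ.mono (le_max_right s 0) (le_max_right t 0) (max_le_max hst (le_refl 0))

lemma measurable_phiT (hΦ : IsNormalizedYoung Φ) : Measurable (phiT Φ) :=
  (phiT_monotone hΦ).measurable

lemma phiT_eq (hΦ : IsNormalizedYoung Φ) {t : ℝ} (ht : 0 ≤ t) : phiT Φ t = Φ t := by
  unfold phiT; rw [max_eq_left ht]

lemma phiT_nonneg (hΦ : IsNormalizedYoung Φ) (t : ℝ) : 0 ≤ phiT Φ t := by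
  have := hΦ.mono (Set.self_mem_Ici) (le_max_right t 0) (le_max_right t 0)
  rw [hΦ.map_zero] at this; exact this

lemma phi_nonneg (hΦ : IsNormalizedYoung Φ) {t : ℝ} (ht : 0 ≤ t) : 0 ≤ Φ t := by
  rw [← phiT_eq hΦ ht]; exact phiT_nonneg hΦ t

lemma phi_le_one (hΦ : IsNormalizedYoung Φ) {t : ℝ} (h0 : 0 ≤ t) (h1 : t ≤ 1) : Φ t ≤ 1 := by
  have := hΦ.mono (show t ∈ Set.Ici (0:ℝ) from h0) (show (1:ℝ) ∈ Set.Ici (0:ℝ) by norm_num) h1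
  rw [hΦ.map_one] at this; exact this

lemma phi_le_self (hΦ : IsNormalizedYoung Φ) {t : ℝ} (h0 : 0 ≤ t) (h1 : t ≤ 1) : Φ t ≤ t := by
  have := hΦ.convex.2 (show (1:ℝ) ∈ Set.Ici (0:ℝ) by norm_num)
    (show (0:ℝ) ∈ Set.Ici (0:ℝ) by norm_num) h0 (by linarith : 0 ≤ 1 - t) (by ring)
  simp only [smul_eq_mul, mul_one, mul_zero, add_zero, hΦ.map_one, hΦ.map_zero] at this
  convert this using 2 <;> ring

/-- Convexity inequality for halves. -/
lemma phi_half (hΦ : IsNormalizedYoung Φ) {x y : ℝ} (hx : 0 ≤ x) (hy : 0 ≤ y) :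
    Φ (x/2 + y/2) ≤ Φ x / 2 + Φ y / 2 := by
  have := hΦ.convex.2 (show x ∈ Set.Ici (0:ℝ) from hx) (show y ∈ Set.Ici (0:ℝ) from hy)
    (by norm_num : (0:ℝ) ≤ 1/2) (by norm_num : (0:ℝ) ≤ 1/2) (by norm_num)
  simp only [smul_eq_mul] at this
  calc Φ (x/2 + y/2) = Φ (1/2 * x + 1/2 * y) := by ring_nf
    _ ≤ 1/2 * Φ x + 1/2 * Φ y := this
    _ = Φ x / 2 + Φ y / 2 := by ring

end S16
end Aux3
noncomputable section Aux4
namespace S16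

open ENNReal

variable {α : ℝ} {Φ : ℝ → ℝ} {ω : ℂ → ℝ} {f : ℂ → ℂ}

lemma luxNorm_le {a b t : ℝ} (ht : 0 < t)
    (h : (∫⁻ z in Qbox a b, ENNReal.ofReal (Φ (‖f z‖ / t) * ω z) ∂(Vm α)) /
          wvol α ω (Qbox a b) ≤ 1) :
    luxNorm α Φ ω a b f ≤ ENNReal.ofReal t :=
  iInf_le_of_le t (iInf_le_of_le ht (iInf_le _ h))

lemma of_lt_luxNorm (hω : IsWeight α ω) (hΦ : IsNormalizedYoung Φ) {a b t : ℝ} (ht : 0 < t)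
    (h : ENNReal.ofReal t < luxNorm α Φ ω a b f) :
    wvol α ω (Qbox a b) ≠ ⊤ ∧ wvol α ω (Qbox a b) ≠ 0 ∧
      wvol α ω (Qbox a b) <
        ∫⁻ z in Qbox a b, ENNReal.ofReal (Φ (‖f z‖ / t) * ω z) ∂(Vm α) := by
  set W := wvol α ω (Qbox a b) with hW
  set nm := ∫⁻ z in Qbox a b, ENNReal.ofReal (Φ (‖f z‖ / t) * ω z) ∂(Vm α) with hnm
  have hnot : ¬ (nm / W ≤ 1) := fun hh => absurd (luxNorm_le ht hh) (not_le.mpr h)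
  have hWtop : W ≠ ⊤ := by
    intro hWt
    exact hnot (by rw [hWt, ENNReal.div_top]; exact zero_le_one)
  have hW0 : W ≠ 0 := by
    intro hW0
    -- then ω = 0 a.e. on the box, so the numerator vanishes
    have hae : (fun z => ENNReal.ofReal (ω z)) =ᵐ[(Vm α).restrict (Qbox a b)] 0 := by
      rw [← lintegral_eq_zero_iff (hω.1.ennreal_ofReal)]
      exact hW0
    have hnm0 : nm = 0 := by
      rw [hnm, ← lintegral_zero (μ := (Vm α).restrict (Qbox a b))]
      apply lintegral_congr_ae
      filter_upwards [hae] with z hz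
      have hωz : ω z ≤ 0 := by
        by_contra hc
        push_neg at hc
        simp only [Pi.zero_apply, ENNReal.ofReal_eq_zero] at hz
        linarith
      have : Φ (‖f z‖ / t) * ω z ≤ 0 :=
        mul_nonpos_of_nonneg_of_nonpos
          (phi_nonneg hΦ (div_nonneg (norm_nonneg _) ht.le)) hωz
      simp [ENNReal.ofReal_eq_zero.mpr this]
    exact hnot (by rw [hnm0, ENNReal.zero_div]; exact zero_le_one)
  refine ⟨hWtop, hW0, ?_⟩
  rw [ENNReal.div_le_iff hW0 hWtop, one_mul] at hnot
  exact lt_of_not_ge hnot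

lemma trunc_lt (hω : IsWeight α ω) (hΦ : IsNormalizedYoung Φ) (hf : Measurable f)
    {a b t : ℝ} (ht : 0 < t)
    (h : ENNReal.ofReal (2 * t) < luxNorm α Φ ω a b f) :
    wvol α ω (Qbox a b) <
      ∫⁻ z in Qbox a b,
        ENNReal.ofReal (Φ (‖if t < ‖f z‖ then f z else 0‖ / t) * ω z)
          ∂(Vm α) := by
  obtain ⟨hWtop, hW0, -⟩ := of_lt_luxNorm hω hΦ (by linarith : (0:ℝ) < 2 * t) h
  set W := wvol α ω (Qbox a b) with hWdef
  set g : ℂ → ℂ := fun z => if t < ‖f z‖ then f z else 0 with hg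
  by_contra hcon
  push_neg at hcon
  -- show the ratio at 2t is at most 1, contradicting h
  apply absurd (luxNorm_le (f := f) (by linarith : (0:ℝ) < 2*t) ?_) (not_le.mpr h)
  rw [ENNReal.div_le_iff hW0 hWtop, one_mul]
  -- pointwise estimate
  have hpt : ∀ z, ENNReal.ofReal (Φ (‖f z‖ / (2*t)) * ω z) ≤
      ENNReal.ofReal ((1/2) * (Φ (‖g z‖ / t) * ω z)) +
        ENNReal.ofReal ((1/2) * ω z) := by
    intro z
    rcases le_or_gt (ω z) 0 with hωz | hωz
    · have h1 : Φ (‖f z‖ / (2*t)) * ω z ≤ 0 :=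
        mul_nonpos_of_nonneg_of_nonpos
          (phi_nonneg hΦ (div_nonneg (norm_nonneg _) (by linarith))) hωz
      simp [ENNReal.ofReal_eq_zero.mpr h1]
    · have key : Φ (‖f z‖ / (2*t)) ≤ (1/2) * Φ (‖g z‖ / t) + 1/2 := by
        by_cases hz : t < ‖f z‖
        · have hgz : g z = f z := by rw [hg]; simp [hz]
          have hx : (0:ℝ) ≤ ‖f z‖ / t := div_nonneg (norm_nonneg _) ht.le
          have := phi_half hΦ hx (le_refl 0)
          rw [hΦ.map_zero] at this
          have harg : ‖f z‖ / (2*t) = (‖f z‖ / t)/2 + 0/2 := by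
            ring
          rw [harg, hgz]
          calc Φ ((‖f z‖ / t)/2 + 0/2) ≤ Φ (‖f z‖/t)/2 + 0/2 := this
            _ ≤ (1/2) * Φ (‖f z‖ / t) + 1/2 := by linarith
        · have hgz : g z = 0 := by rw [hg]; simp [hz]
          push_neg at hz
          have h0 : (0:ℝ) ≤ ‖f z‖ / (2*t) :=
            div_nonneg (norm_nonneg _) (by linarith)
          have h1 : ‖f z‖ / (2*t) ≤ 1/2 := by
            rw [div_le_div_iff₀ (by linarith) (by norm_num)]
            linarith
          have := phi_le_self hΦ h0 (by linarith)
          have hΦ0 : (0:ℝ) ≤ Φ (‖g z‖ / t) := by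
            apply phi_nonneg hΦ
            exact div_nonneg (norm_nonneg _) ht.le
          linarith
      calc ENNReal.ofReal (Φ (‖f z‖ / (2*t)) * ω z)
          ≤ ENNReal.ofReal (((1/2) * Φ (‖g z‖ / t) + 1/2) * ω z) := by
            apply ENNReal.ofReal_le_ofReal
            exact mul_le_mul_of_nonneg_right key hωz.le
        _ = ENNReal.ofReal ((1/2) * (Φ (‖g z‖ / t) * ω z) + (1/2) * ω z) := by
            ring_nf
        _ = ENNReal.ofReal ((1/2) * (Φ (‖g z‖ / t) * ω z)) +
              ENNReal.ofReal ((1/2) * ω z) := by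
            rw [ENNReal.ofReal_add]
            · apply mul_nonneg (by norm_num : (0:ℝ) ≤ 1/2)
              exact mul_nonneg
                (phi_nonneg hΦ (div_nonneg (norm_nonneg _) ht.le)) hωz.le
            · exact mul_nonneg (by norm_num) hωz.le
  -- measurability of the truncated composition
  have hgm : Measurable g := by
    rw [hg]
    exact Measurable.ite
      (measurableSet_lt measurable_const (continuous_norm.measurable.comp hf))
      hf measurable_const
  have hphm : Measurable (fun z => Φ (‖g z‖ / t)) := by
    have heq : (fun z => Φ (‖g z‖ / t)) =
        fun z => phiT Φ (‖g z‖ / t) :=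
      funext fun z => (phiT_eq hΦ (div_nonneg (norm_nonneg _) ht.le)).symm
    rw [heq]
    exact (measurable_phiT hΦ).comp
      ((continuous_norm.measurable.comp hgm).div_const t)
  have hAm : Measurable (fun z => ENNReal.ofReal ((1/2) * (Φ (‖g z‖ / t) * ω z))) :=
    ((measurable_const.mul (hphm.mul hω.1))).ennreal_ofReal
  calc (∫⁻ z in Qbox a b, ENNReal.ofReal (Φ (‖f z‖ / (2*t)) * ω z) ∂(Vm α))
      ≤ ∫⁻ z in Qbox a b,
          (ENNReal.ofReal ((1/2) * (Φ (‖g z‖ / t) * ω z)) +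
            ENNReal.ofReal ((1/2) * ω z)) ∂(Vm α) := lintegral_mono fun z => hpt z
    _ = (∫⁻ z in Qbox a b, ENNReal.ofReal ((1/2) * (Φ (‖g z‖ / t) * ω z)) ∂(Vm α)) +
          ∫⁻ z in Qbox a b, ENNReal.ofReal ((1/2) * ω z) ∂(Vm α) :=
        lintegral_add_left hAm _
    _ ≤ ENNReal.ofReal (1/2) * W + ENNReal.ofReal (1/2) * W := by
        apply add_le_add
        · have : ∀ z, ENNReal.ofReal ((1/2) * (Φ (‖g z‖ / t) * ω z)) =
              ENNReal.ofReal (1/2) * ENNReal.ofReal (Φ (‖g z‖ / t) * ω z) :=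
            fun z => ENNReal.ofReal_mul (by norm_num)
          simp only [this]
          rw [lintegral_const_mul' _ _ (by simp : ENNReal.ofReal (1/2) ≠ ⊤)]
          exact mul_le_mul_right hcon _
        · have : ∀ z, ENNReal.ofReal ((1/2) * ω z) =
              ENNReal.ofReal (1/2) * ENNReal.ofReal (ω z) :=
            fun z => ENNReal.ofReal_mul (by norm_num)
          simp only [this]
          rw [lintegral_const_mul' _ _ (by simp : ENNReal.ofReal (1/2) ≠ ⊤)]
          exact le_refl _
    _ = (ENNReal.ofReal (1/2) + ENNReal.ofReal (1/2)) * W := by ring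
    _ = W := by
        rw [← ENNReal.ofReal_add (by norm_num) (by norm_num)]
        norm_num

end S16
end Aux4
noncomputable section Aux5
namespace S16

open ENNReal MeasureTheory

variable {α β : ℝ} {Φ : ℝ → ℝ} {ω : ℂ → ℝ} {f : ℂ → ℂ} {μ : Measure ℂ}

lemma measurable_Kmu : Measurable (Kmu α ω μ) := by
  apply measurable_of_Ioi
  intro c
  apply IsOpen.measurableSet
  rw [isOpen_iff_mem_nhds]
  intro z hz
  simp only [Set.mem_preimage, Set.mem_Ioi, Kmu, lt_iSup_iff] at hz
  obtain ⟨a, b, hzQ, hc⟩ := hz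
  refine Filter.mem_of_superset ((isOpen_Qbox a b).mem_nhds hzQ) ?_
  intro w hw
  simp only [Set.mem_preimage, Set.mem_Ioi, Kmu, lt_iSup_iff]
  exact ⟨a, b, hw, hc⟩

lemma Kmu_ge {a b : ℝ} {z : ℂ} (hz : z ∈ Qbox a b) :
    μ (Qbox a b) / wvol α ω (Qbox a b) ≤ Kmu α ω μ z := by
  refine le_iSup_of_le a (le_iSup_of_le b ?_)
  exact le_iSup (fun _ : z ∈ Qbox a b => μ (Qbox a b) / wvol α ω (Qbox a b)) hz

lemma mu_Qbox_le (hω : IsWeight α ω) {a b : ℝ}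
    (hW0 : wvol α ω (Qbox a b) ≠ 0) (hWtop : wvol α ω (Qbox a b) ≠ ⊤) :
    μ (Qbox a b) ≤ ∫⁻ z in Qbox a b, Kmu α ω μ z * ENNReal.ofReal (ω z) ∂(Vm α) := by
  have step : μ (Qbox a b) / wvol α ω (Qbox a b) * wvol α ω (Qbox a b) ≤
      ∫⁻ z in Qbox a b, Kmu α ω μ z * ENNReal.ofReal (ω z) ∂(Vm α) := by
    rw [show μ (Qbox a b) / wvol α ω (Qbox a b) * wvol α ω (Qbox a b) =
        ∫⁻ z in Qbox a b,
          μ (Qbox a b) / wvol α ω (Qbox a b) * ENNReal.ofReal (ω z) ∂(Vm α) from by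
      rw [lintegral_const_mul _ (hω.1.ennreal_ofReal)]; rfl]
    apply setLIntegral_mono (measurable_Kmu.mul hω.1.ennreal_ofReal)
    intro z hz
    exact mul_le_mul_left (Kmu_ge hz) _
  rwa [ENNReal.div_mul_cancel hW0 hWtop] at step

/-- `dyadicGrid` as a range. -/
lemma dyadicGrid_eq (β : ℝ) :
    dyadicGrid β = Set.range (fun pr : ℤ × ℤ => (lep β pr.1 pr.2, rep β pr.1 pr.2)) := by
  ext I
  simp only [dyadicGrid, Set.mem_setOf_eq, Set.mem_range]
  constructor
  · rintro ⟨j, m, h1, h2⟩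
    refine ⟨(j, m), ?_⟩
    have : rep β j m = (2:ℝ)^j * (m + 1 + (-1:ℝ)^j * β) := by
      unfold rep lep; ring
    rw [Prod.ext_iff]
    constructor
    · show lep β j m = I.1
      rw [h1]; rfl
    · show rep β j m = I.2
      rw [this, h2]
  · rintro ⟨⟨j, m⟩, hI⟩
    refine ⟨j, m, ?_, ?_⟩
    · rw [← hI]; rfl
    · rw [← hI]
      show rep β j m = (2:ℝ)^j * (m + 1 + (-1:ℝ)^j * β)
      unfold rep lep; ring

lemma dyadicMax_eq (β α : ℝ) (Φ : ℝ → ℝ) (ω : ℂ → ℝ) (f : ℂ → ℂ) (z : ℂ) :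
    dyadicMax β α Φ ω f z =
      ⨆ (pr : ℤ × ℤ) (_ : z ∈ Qb β pr),
        luxNorm α Φ ω (lep β pr.1 pr.2) (rep β pr.1 pr.2) f := by
  rw [dyadicMax, dyadicGrid_eq, iSup_range]
  rfl

lemma measurable_dyadicMax : Measurable (dyadicMax β α Φ ω f) := by
  have : dyadicMax β α Φ ω f = fun z =>
      ⨆ (pr : ℤ × ℤ), (Qb β pr).indicator
        (fun _ => luxNorm α Φ ω (lep β pr.1 pr.2) (rep β pr.1 pr.2) f) z := by
    funext z
    rw [dyadicMax_eq]
    congr 1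
    funext pr
    by_cases hz : z ∈ Qb β pr
    · rw [Set.indicator_of_mem hz, iSup_pos hz]
    · rw [Set.indicator_of_notMem hz]
      simp [hz]
  rw [this]
  exact Measurable.iSup fun pr =>
    measurable_const.indicator (measurableSet_Qbox _ _)

lemma level_set_eq (c : ℝ≥0∞) :
    {z : ℂ | c < dyadicMax β α Φ ω f z} =
      ⋃ pr ∈ {pr : ℤ × ℤ | c < luxNorm α Φ ω (lep β pr.1 pr.2) (rep β pr.1 pr.2) f},
        Qb β pr := by
  ext z
  simp only [Set.mem_setOf_eq, Set.mem_iUnion, dyadicMax_eq, lt_iSup_iff, exists_prop]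
  constructor
  · rintro ⟨pr, hz, hc⟩; exact ⟨pr, hc, hz⟩
  · rintro ⟨pr, hc, hz⟩; exact ⟨pr, hz, hc⟩

end S16
end Aux5
noncomputable section Aux6
namespace S16

open ENNReal MeasureTheory

/-- `2^k` as an extended nonnegative real. -/
def edk (k : ℤ) : ℝ≥0∞ := ENNReal.ofReal ((2:ℝ) ^ k)

lemma edk_pos (k : ℤ) : 0 < edk k := ENNReal.ofReal_pos.mpr (two_zpow_pos k)

lemma edk_ne_top (k : ℤ) : edk k ≠ ⊤ := ENNReal.ofReal_ne_top

lemma edk_succ (k : ℤ) : edk (k + 1) = 2 * edk k := by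
  unfold edk
  rw [zpow_add_one₀ (by norm_num : (2:ℝ) ≠ 0), mul_comm, ENNReal.ofReal_mul (by norm_num)]
  norm_num

lemma edk_rpow (k : ℤ) (e : ℝ) : edk k ^ e = (2:ℝ≥0∞) ^ ((k : ℝ) * e) := by
  unfold edk
  rw [ENNReal.ofReal_rpow_of_pos (two_zpow_pos k)]
  rw [show ((2:ℝ) ^ k) = (2:ℝ) ^ ((k:ℝ)) from (Real.rpow_intCast 2 k).symm]
  rw [← Real.rpow_mul (by norm_num : (0:ℝ) ≤ 2)]
  rw [← ENNReal.ofReal_rpow_of_pos (by norm_num : (0:ℝ) < 2)]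
  norm_num

lemma two_rpow_ne_top (e : ℝ) : (2:ℝ≥0∞) ^ e ≠ ⊤ := by
  intro h
  have := ENNReal.rpow_eq_top_iff.mp h
  rcases this with ⟨h1, _⟩ | ⟨h1, _⟩ <;> norm_num at h1

/-- Geometric upper bound: the sum of `(2^k)^e` over levels below `x` is
controlled by `x^e`. -/
lemma geom_upper {e : ℝ} (he : 0 < e) (x : ℝ≥0∞) :
    ∑' k : ℤ, (if edk k < x then edk k ^ e else 0) ≤
      (1 - (2:ℝ≥0∞) ^ (-e))⁻¹ * x ^ e := by
  rcases eq_or_ne x 0 with rfl | hx0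
  · simp
  rcases eq_or_ne x ⊤ with rfl | hxt
  · rw [ENNReal.top_rpow_of_pos he]
    rw [ENNReal.mul_top]
    · exact le_top
    · simp
  -- finite positive case
  have hxR : 0 < x.toReal := ENNReal.toReal_pos hx0 hxt
  obtain ⟨k₀, hk₁, hk₂⟩ := exists_mem_Ioc_zpow hxR (by norm_num : (1:ℝ) < 2)
  have hsupp : ∀ k : ℤ, edk k < x → k ≤ k₀ := by
    intro k hk
    by_contra hc
    push_neg at hc
    have h1 : x ≤ edk k := by
      calc x = ENNReal.ofReal x.toReal := (ENNReal.ofReal_toReal hxt).symm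
        _ ≤ ENNReal.ofReal ((2:ℝ) ^ (k₀ + 1)) := ENNReal.ofReal_le_ofReal hk₂
        _ ≤ ENNReal.ofReal ((2:ℝ) ^ k) := ENNReal.ofReal_le_ofReal
            ((zpow_le_zpow_iff_right₀ (by norm_num : (1:ℝ) < 2)).mpr (by omega))
    exact absurd hk (not_lt.mpr h1)
  calc ∑' k : ℤ, (if edk k < x then edk k ^ e else 0)
      ≤ ∑' k : ℤ, (if k ≤ k₀ then edk k ^ e else 0) := by
        apply ENNReal.tsum_le_tsum
        intro k
        by_cases hk : edk k < x
        · rw [if_pos hk, if_pos (hsupp k hk)]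
        · rw [if_neg hk]; exact zero_le
    _ = ∑' n : ℕ, (if k₀ - (n:ℤ) ≤ k₀ then edk (k₀ - n) ^ e else 0) := by
        refine (Function.Injective.tsum_eq (g := fun n : ℕ => k₀ - (n:ℤ)) ?_ ?_).symm
        · intro n n' h
          simp only at h
          omega
        · intro k hk
          rw [Function.mem_support] at hk
          have hkk : k ≤ k₀ := by
            by_contra hc
            exact hk (if_neg hc)
          exact ⟨(k₀ - k).toNat, by simp only; omega⟩
    _ = ∑' n : ℕ, (2:ℝ≥0∞) ^ ((k₀:ℝ) * e) * ((2:ℝ≥0∞) ^ (-e)) ^ (n:ℕ) := by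
        congr 1
        funext n
        rw [if_pos (by omega : k₀ - (n:ℤ) ≤ k₀), edk_rpow]
        rw [← ENNReal.rpow_natCast ((2:ℝ≥0∞) ^ (-e)) n, ← ENNReal.rpow_mul]
        rw [← ENNReal.rpow_add _ _ (by norm_num) (by norm_num)]
        congr 1
        push_cast
        ring
    _ = (2:ℝ≥0∞) ^ ((k₀:ℝ) * e) * (1 - (2:ℝ≥0∞) ^ (-e))⁻¹ := by
        rw [ENNReal.tsum_mul_left, ENNReal.tsum_geometric]
    _ ≤ x ^ e * (1 - (2:ℝ≥0∞) ^ (-e))⁻¹ := by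
        apply mul_le_mul_left
        rw [← edk_rpow]
        apply ENNReal.rpow_le_rpow _ he.le
        unfold edk
        calc ENNReal.ofReal ((2:ℝ)^k₀) ≤ ENNReal.ofReal x.toReal :=
              ENNReal.ofReal_le_ofReal hk₁.le
          _ = x := ENNReal.ofReal_toReal hxt
    _ = (1 - (2:ℝ≥0∞) ^ (-e))⁻¹ * x ^ e := mul_comm _ _

/-- Geometric lower bound: `x^e` is controlled by the level sum. -/
lemma geom_lower {e : ℝ} (he : 0 < e) (x : ℝ≥0∞) :
    x ^ e ≤ (2:ℝ≥0∞) ^ e * ∑' k : ℤ, (if edk k < x then edk k ^ e else 0) := by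
  rcases eq_or_ne x 0 with rfl | hx0
  · rw [ENNReal.zero_rpow_of_pos he]; exact zero_le
  rcases eq_or_ne x ⊤ with rfl | hxt
  · -- the sum is infinite
    have hsum : (∑' k : ℤ, (if edk k < (⊤:ℝ≥0∞) then edk k ^ e else 0)) = ⊤ := by
      have h1 : ∀ k : ℤ, (if edk k < (⊤:ℝ≥0∞) then edk k ^ e else 0) = edk k ^ e := by
        intro k
        rw [if_pos (lt_of_le_of_ne le_top (edk_ne_top k))]
      rw [tsum_congr h1]
      have h2 : (∑' n : ℕ, edk ((n:ℤ)) ^ e) ≤ ∑' k : ℤ, edk k ^ e :=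
        ENNReal.tsum_comp_le_tsum_of_injective (by intro a b h; omega) _
      have h3 : (∑' n : ℕ, edk ((n:ℤ)) ^ e) = ⊤ := by
        have : ∀ n : ℕ, edk ((n:ℤ)) ^ e = ((2:ℝ≥0∞) ^ e) ^ (n:ℕ) := by
          intro n
          rw [edk_rpow, ← ENNReal.rpow_natCast ((2:ℝ≥0∞) ^ e) n, ← ENNReal.rpow_mul]
          congr 1
          push_cast
          ring
        rw [tsum_congr this, ENNReal.tsum_geometric]
        rw [tsub_eq_zero_of_le (ENNReal.one_le_rpow (by norm_num) he)]
        simp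
      exact eq_top_iff.mpr (h3 ▸ h2)
    rw [hsum]
    rw [ENNReal.mul_top (ENNReal.rpow_pos (by norm_num) (by norm_num)).ne']
    exact le_top
  have hxR : 0 < x.toReal := ENNReal.toReal_pos hx0 hxt
  obtain ⟨k₀, hk₁, hk₂⟩ := exists_mem_Ioc_zpow hxR (by norm_num : (1:ℝ) < 2)
  have hlt : edk k₀ < x := by
    unfold edk
    calc ENNReal.ofReal ((2:ℝ)^k₀) < ENNReal.ofReal x.toReal :=
          (ENNReal.ofReal_lt_ofReal_iff hxR).mpr hk₁
      _ = x := ENNReal.ofReal_toReal hxt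
  calc x ^ e ≤ edk (k₀ + 1) ^ e := by
        apply ENNReal.rpow_le_rpow _ he.le
        calc x = ENNReal.ofReal x.toReal := (ENNReal.ofReal_toReal hxt).symm
          _ ≤ edk (k₀ + 1) := ENNReal.ofReal_le_ofReal hk₂
    _ = (2:ℝ≥0∞) ^ e * edk k₀ ^ e := by
        rw [edk_succ, ENNReal.mul_rpow_of_nonneg _ _ he.le]
    _ ≤ (2:ℝ≥0∞) ^ e * ∑' k : ℤ, (if edk k < x then edk k ^ e else 0) := by
        apply mul_le_mul_right
        calc edk k₀ ^ e = (if edk k₀ < x then edk k₀ ^ e else 0) := by rw [if_pos hlt]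
          _ ≤ ∑' k : ℤ, (if edk k < x then edk k ^ e else 0) := ENNReal.le_tsum k₀

lemma one_lt_two_rpow {e : ℝ} (he : 0 < e) : (1:ℝ≥0∞) < (2:ℝ≥0∞) ^ e :=
  ENNReal.one_lt_rpow (by norm_num) he

lemma Cgeom_ne_top {e : ℝ} (he : 0 < e) : (1 - (2:ℝ≥0∞) ^ (-e))⁻¹ ≠ ⊤ := by
  rw [ne_eq, ENNReal.inv_eq_top, tsub_eq_zero_iff_le, not_le, ENNReal.rpow_neg]
  exact ENNReal.inv_lt_one.mpr (one_lt_two_rpow he)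

end S16
end Aux6
noncomputable section Aux7
namespace S16

open ENNReal MeasureTheory

lemma lint_rpow_le (m' : Measure ℂ) (F : ℂ → ℝ≥0∞) {e : ℝ} (he : 0 < e)
    (hE : ∀ k : ℤ, MeasurableSet {z : ℂ | edk k < F z}) :
    ∫⁻ z, F z ^ e ∂m' ≤ (2:ℝ≥0∞) ^ e * ∑' k : ℤ, edk k ^ e * m' {z | edk k < F z} := by
  have hind : ∀ (k : ℤ) (z : ℂ), (if edk k < F z then edk k ^ e else 0) =
      ({z : ℂ | edk k < F z}).indicator (fun _ => edk k ^ e) z := by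
    intro k z
    rw [Set.indicator_apply]
    rfl
  calc ∫⁻ z, F z ^ e ∂m'
      ≤ ∫⁻ z, (2:ℝ≥0∞)^e * ∑' k : ℤ, (if edk k < F z then edk k ^ e else 0) ∂m' :=
        lintegral_mono fun z => geom_lower he (F z)
    _ = (2:ℝ≥0∞)^e * ∫⁻ z, ∑' k : ℤ, (if edk k < F z then edk k ^ e else 0) ∂m' :=
        lintegral_const_mul' _ _ (two_rpow_ne_top e)
    _ = (2:ℝ≥0∞)^e * ∑' k : ℤ, ∫⁻ z, (if edk k < F z then edk k ^ e else 0) ∂m' := by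
        congr 1
        simp only [hind]
        exact lintegral_tsum fun k =>
          (measurable_const.indicator (hE k)).aemeasurable
    _ = (2:ℝ≥0∞)^e * ∑' k : ℤ, edk k ^ e * m' {z | edk k < F z} := by
        congr 1
        refine tsum_congr fun k => ?_
        simp only [hind]
        rw [lintegral_indicator (hE k), setLIntegral_const]

variable {Φ : ℝ → ℝ}

lemma Aint_lt_top (hΦ : IsNormalizedYoung Φ) {p : ℝ} (hp : 0 < p) (hΦp : InBp Φ p) :
    (∫⁻ t in Set.Ioi (1:ℝ), ENNReal.ofReal (phiT Φ t / t ^ (p+1))) < ⊤ := by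
  obtain ⟨-, c, hc, hint⟩ := hΦp
  have hcongr : ∀ c' : ℝ, 0 < c' →
      (∫⁻ t in Set.Ioi c', ENNReal.ofReal (phiT Φ t / t ^ (p+1))) =
        ∫⁻ t in Set.Ioi c', ENNReal.ofReal (Φ t / t ^ (p+1)) := by
    intro c' hc'
    apply setLIntegral_congr_fun_ae measurableSet_Ioi
    apply Filter.Eventually.of_forall
    intro t ht
    rw [phiT_eq hΦ (le_of_lt (lt_trans hc' ht))]
  rcases le_or_gt c 1 with hc1 | hc1
  · calc (∫⁻ t in Set.Ioi (1:ℝ), ENNReal.ofReal (phiT Φ t / t ^ (p+1)))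
        ≤ ∫⁻ t in Set.Ioi c, ENNReal.ofReal (phiT Φ t / t ^ (p+1)) :=
          lintegral_mono_set (Set.Ioi_subset_Ioi hc1)
      _ = ∫⁻ t in Set.Ioi c, ENNReal.ofReal (Φ t / t ^ (p+1)) := hcongr c hc
      _ < ⊤ := hint
  · have hsplit : Set.Ioi (1:ℝ) = Set.Ioc 1 c ∪ Set.Ioi c := (Set.Ioc_union_Ioi_eq_Ioi hc1.le).symm
    rw [hsplit, lintegral_union measurableSet_Ioi (Set.Ioc_disjoint_Ioi le_rfl)]
    apply ENNReal.add_lt_top.mpr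
    constructor
    · calc (∫⁻ t in Set.Ioc (1:ℝ) c, ENNReal.ofReal (phiT Φ t / t ^ (p+1)))
          ≤ ∫⁻ _ in Set.Ioc (1:ℝ) c, ENNReal.ofReal (phiT Φ c) := by
            apply setLIntegral_mono measurable_const
            intro t ht
            apply ENNReal.ofReal_le_ofReal
            calc phiT Φ t / t ^ (p+1) ≤ phiT Φ t := by
                  apply div_le_self (phiT_nonneg hΦ t)
                  apply Real.one_le_rpow ht.1.le
                  linarith
              _ ≤ phiT Φ c := phiT_monotone hΦ ht.2
        _ = ENNReal.ofReal (phiT Φ c) * volume (Set.Ioc (1:ℝ) c) := setLIntegral_const _ _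
        _ < ⊤ := by
            rw [Real.volume_Ioc]
            exact ENNReal.mul_lt_top ENNReal.ofReal_lt_top ENNReal.ofReal_lt_top
    · rw [hcongr c hc]
      exact hint

end S16
end Aux7
noncomputable section Aux8
namespace S16

open ENNReal MeasureTheory

variable {Φ : ℝ → ℝ}

lemma two_zpow_succ (k : ℤ) : (2:ℝ)^k = 2 * (2:ℝ)^(k-1) := by
  have h := zpow_add_one₀ (by norm_num : (2:ℝ) ≠ 0) (k-1)
  rw [sub_add_cancel] at h
  rw [h]; ring

lemma phi_sum_le (hΦ : IsNormalizedYoung Φ) {p : ℝ} (hp : 0 < p) (u w : ℝ)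
    (hu : 0 ≤ u) (hw : 0 ≤ w) :
    ∑' k : ℤ, edk k ^ p *
        ENNReal.ofReal (Φ ((if (2:ℝ)^(k-1) < u then u else 0) / 2^(k-1)) * w)
      ≤ (2:ℝ≥0∞)^(2*p+1) *
          (∫⁻ t in Set.Ioi (1:ℝ), ENNReal.ofReal (phiT Φ t / t^(p+1))) *
          (ENNReal.ofReal u ^ p * ENNReal.ofReal w) := by
  set A := ∫⁻ t in Set.Ioi (1:ℝ), ENNReal.ofReal (phiT Φ t / t^(p+1)) with hA
  rcases eq_or_lt_of_le hu with rfl | hu0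
  · -- u = 0 : all terms vanish
    have : ∀ k : ℤ, edk k ^ p *
        ENNReal.ofReal (Φ ((if (2:ℝ)^(k-1) < 0 then (0:ℝ) else 0) / 2^(k-1)) * w) = 0 := by
      intro k
      rw [if_neg (not_lt.mpr (two_zpow_pos (k-1)).le)]
      rw [zero_div, hΦ.map_zero, zero_mul, ENNReal.ofReal_zero, mul_zero]
    rw [tsum_congr this]
    simp
  -- u > 0
  set B : ℤ → Set ℝ := fun k => Set.Ioc (u / 2^(k-1)) (2 * (u / 2^(k-1))) with hB
  set g : ℝ → ℝ≥0∞ := fun t => ENNReal.ofReal (phiT Φ t / t^(p+1)) with hg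
  -- termwise estimate
  have hterm : ∀ k : ℤ,
      edk k ^ p * ENNReal.ofReal (Φ ((if (2:ℝ)^(k-1) < u then u else 0) / 2^(k-1)) * w)
        ≤ ((2:ℝ≥0∞)^(2*p+1) * ENNReal.ofReal u ^ p *
            (if (2:ℝ)^(k-1) < u then ∫⁻ t in B k, g t else 0)) * ENNReal.ofReal w := by
    intro k
    by_cases hk : (2:ℝ)^(k-1) < u
    · rw [if_pos hk, if_pos hk]
      set c : ℝ := (2:ℝ)^(k-1) with hc
      have hcpos : 0 < c := two_zpow_pos (k-1)
      set T : ℝ := u / c with hT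
      have hTpos : 0 < T := div_pos hu0 hcpos
      have hT1 : 1 < T := (one_lt_div hcpos).mpr hk
      -- lower bound for the integral over B k
      have hint : ENNReal.ofReal (phiT Φ T / (2*T)^(p+1)) * ENNReal.ofReal T
          ≤ ∫⁻ t in B k, g t := by
        have hml : ∀ t ∈ B k, ENNReal.ofReal (phiT Φ T / (2*T)^(p+1)) ≤ g t := by
          intro t ht
          rw [hg]
          apply ENNReal.ofReal_le_ofReal
          have htpos : 0 < t := lt_trans hTpos ht.1
          apply div_le_div₀ (phiT_nonneg hΦ t) (phiT_monotone hΦ ht.1.le)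
            (Real.rpow_pos_of_pos htpos _)
          exact Real.rpow_le_rpow htpos.le ht.2 (by linarith)
        calc ENNReal.ofReal (phiT Φ T / (2*T)^(p+1)) * ENNReal.ofReal T
            = ENNReal.ofReal (phiT Φ T / (2*T)^(p+1)) * volume (B k) := by
              rw [hB]
              simp only []
              rw [Real.volume_Ioc]
              congr 1
              rw [← hT]
              congr 1
              ring
          _ = ∫⁻ _ in B k, ENNReal.ofReal (phiT Φ T / (2*T)^(p+1)) := (setLIntegral_const _ _).symm
          _ ≤ ∫⁻ t in B k, g t := setLIntegral_mono
              (((measurable_phiT hΦ).div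
                ((Real.continuous_rpow_const (by linarith : (0:ℝ) ≤ p+1)).measurable)).ennreal_ofReal)
              hml
      -- the key identity
      have hkey : edk k ^ p * ENNReal.ofReal (phiT Φ T) =
          (2:ℝ≥0∞)^(2*p+1) * ENNReal.ofReal u ^ p *
            (ENNReal.ofReal (phiT Φ T / (2*T)^(p+1)) * ENNReal.ofReal T) := by
        have e1 : edk k ^ p = ENNReal.ofReal (((2:ℝ)^k) ^ p) :=
          ENNReal.ofReal_rpow_of_pos (two_zpow_pos k)
        have e2 : ENNReal.ofReal u ^ p = ENNReal.ofReal (u ^ p) :=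
          ENNReal.ofReal_rpow_of_pos hu0
        have e3 : ((2:ℝ≥0∞))^(2*p+1) = ENNReal.ofReal ((2:ℝ)^(2*p+1)) := by
          rw [← ENNReal.ofReal_rpow_of_pos (by norm_num : (0:ℝ) < 2)]
          norm_num
        rw [e1, e2, e3]
        rw [← ENNReal.ofReal_mul (by positivity : (0:ℝ) ≤ ((2:ℝ)^k) ^ p)]
        rw [← ENNReal.ofReal_mul (by positivity : (0:ℝ) ≤ (2:ℝ)^(2*p+1))]
        rw [← ENNReal.ofReal_mul (div_nonneg (phiT_nonneg hΦ T) (by positivity))]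
        rw [← ENNReal.ofReal_mul (by positivity : (0:ℝ) ≤ (2:ℝ)^(2*p+1) * u ^ p)]
        congr 1
        -- real identity
        have r1 : ((2:ℝ)^k) ^ p = 2 ^ p * c ^ p := by
          rw [show ((2:ℝ)^k) = 2 * c from by rw [hc]; exact two_zpow_succ k]
          exact Real.mul_rpow (by norm_num) hcpos.le
        have r2 : u ^ p = T ^ p * c ^ p := by
          rw [show u = T * c from by rw [hT]; field_simp]
          exact Real.mul_rpow hTpos.le hcpos.le
        have r3 : ((2:ℝ)*T) ^ (p+1) = 2 ^ (p+1) * T ^ (p+1) :=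
          Real.mul_rpow (by norm_num) hTpos.le
        have r4 : (2:ℝ) ^ (2*p+1) = 2 ^ p * 2 ^ (p+1) := by
          rw [← Real.rpow_add (by norm_num : (0:ℝ) < 2)]
          congr 1
          ring
        have r5 : T ^ (p+1) = T ^ p * T := Real.rpow_add_one hTpos.ne' p
        rw [r1, r2, r3, r4, r5]
        have h2p : (0:ℝ) < 2 ^ p := Real.rpow_pos_of_pos (by norm_num) _
        have h2p1 : (0:ℝ) < 2 ^ (p+1) := Real.rpow_pos_of_pos (by norm_num) _
        have hTp : (0:ℝ) < T ^ p := Real.rpow_pos_of_pos hTpos _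
        have hcp : (0:ℝ) < c ^ p := Real.rpow_pos_of_pos hcpos _
        field_simp
      -- put it together
      have habs : Φ (u / c) * w = phiT Φ T * w := by
        rw [hT, phiT_eq hΦ (le_of_lt hTpos)]
      rw [habs, ENNReal.ofReal_mul (phiT_nonneg hΦ T)]
      rw [← mul_assoc]
      apply mul_le_mul_left
      rw [hkey]
      exact mul_le_mul_right hint _
    · rw [if_neg hk, if_neg hk]
      rw [zero_div, hΦ.map_zero, zero_mul, ENNReal.ofReal_zero, mul_zero]
      exact zero_le
  -- sum the right-hand sides
  have hsum : ∑' k : ℤ, (if (2:ℝ)^(k-1) < u then ∫⁻ t in B k, g t else 0) ≤ A := by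
    set T' : Set ℤ := {k : ℤ | (2:ℝ)^(k-1) < u} with hT'
    have hind : ∀ k : ℤ, (if (2:ℝ)^(k-1) < u then ∫⁻ t in B k, g t else 0) =
        T'.indicator (fun k => ∫⁻ t in B k, g t) k := by
      intro k
      rw [Set.indicator_apply]
      rfl
    rw [tsum_congr hind, ← tsum_subtype]
    have hdisj : Pairwise (Function.onFun Disjoint fun k : T' => B (k:ℤ)) := by
      have key : ∀ k k' : ℤ, k < k' → Disjoint (B k') (B k) := by
        intro k k' hkk'
        rw [Set.disjoint_left]
        intro t ht ht'
        have h1 : t ≤ 2 * (u / 2^(k'-1)) := ht.2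
        have h2 : u / 2^(k-1) < t := ht'.1
        have h2le : (2:ℝ) * 2^(k-1) ≤ 2^(k'-1) := by
          rw [← two_zpow_succ k]
          exact (zpow_le_zpow_iff_right₀ (by norm_num : (1:ℝ) < 2)).mpr (by omega)
        have hle : 2 * (u / 2^(k'-1)) ≤ u / 2^(k-1) := by
          rw [← mul_div_assoc, div_le_div_iff₀ (two_zpow_pos _) (two_zpow_pos _)]
          nlinarith [hu0.le, two_zpow_pos (k-1), two_zpow_pos (k'-1)]
        linarith
      intro i j hij
      rcases lt_trichotomy (i:ℤ) (j:ℤ) with h | h | h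
      · exact (key i j h).symm
      · exact absurd (Subtype.ext h) hij
      · exact key j i h
    calc (∑' k : T', ∫⁻ t in B (k:ℤ), g t)
        = ∫⁻ t in ⋃ k : T', B (k:ℤ), g t :=
          (lintegral_iUnion (fun k => measurableSet_Ioc) hdisj g).symm
      _ ≤ ∫⁻ t in Set.Ioi (1:ℝ), g t := by
          apply lintegral_mono_set
          refine Set.iUnion_subset fun k => ?_
          intro t ht
          have hk : (2:ℝ)^((k:ℤ)-1) < u := k.2
          have : (1:ℝ) < u / 2^((k:ℤ)-1) := (one_lt_div (two_zpow_pos _)).mpr hk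
          exact lt_trans this ht.1
      _ = A := rfl
  calc ∑' k : ℤ, edk k ^ p *
        ENNReal.ofReal (Φ ((if (2:ℝ)^(k-1) < u then u else 0) / 2^(k-1)) * w)
      ≤ ∑' k : ℤ, ((2:ℝ≥0∞)^(2*p+1) * ENNReal.ofReal u ^ p *
          (if (2:ℝ)^(k-1) < u then ∫⁻ t in B k, g t else 0)) * ENNReal.ofReal w :=
        ENNReal.tsum_le_tsum hterm
    _ = (2:ℝ≥0∞)^(2*p+1) * ENNReal.ofReal u ^ p * ENNReal.ofReal w *
          ∑' k : ℤ, (if (2:ℝ)^(k-1) < u then ∫⁻ t in B k, g t else 0) := by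
        rw [← ENNReal.tsum_mul_left]
        congr 1
        funext k
        ring
    _ ≤ (2:ℝ≥0∞)^(2*p+1) * ENNReal.ofReal u ^ p * ENNReal.ofReal w * A :=
        mul_le_mul_right hsum _
    _ = (2:ℝ≥0∞)^(2*p+1) * A * (ENNReal.ofReal u ^ p * ENNReal.ofReal w) := by ring

end S16
end Aux8
noncomputable section Aux9
namespace S16

open ENNReal MeasureTheory

variable {α : ℝ} {Φ : ℝ → ℝ} {ω : ℂ → ℝ}

lemma measurable_phi_integrand (hω : IsWeight α ω) (hΦ : IsNormalizedYoung Φ)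
    {g : ℂ → ℂ} (hg : Measurable g) {t : ℝ} (ht : 0 < t) :
    Measurable fun z => ENNReal.ofReal (Φ (‖g z‖ / t) * ω z) := by
  have heq : (fun z => Φ (‖g z‖ / t)) =
      fun z => phiT Φ (‖g z‖ / t) :=
    funext fun z => (phiT_eq hΦ (div_nonneg (norm_nonneg _) ht.le)).symm
  have hphm : Measurable (fun z => Φ (‖g z‖ / t)) := by
    rw [heq]
    exact (measurable_phiT hΦ).comp
      ((continuous_norm.measurable.comp hg).div_const t)
  exact (hphm.mul hω.1).ennreal_ofReal

end S16
end Aux9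

/-- Lemma 3.1: for `1 < q < p < ∞`, `ω ∈ 𝔹_{∞,α}`, `Φ ∈ B_p`,
if `K_μ ∈ L^s(H, ω dV_α)` with `s = p/(p-q)`, then for `β ∈ {0, 1/3}`,
`(∫ (M^{d,β}_{Φ,ω,α} f)^q dμ)^{1/q} ≤ C (∫ |f|^p ω dV_α)^{1/p}`. -/
theorem statement16 (α p q : ℝ) (hα : -1 < α) (hq : 1 < q) (hqp : q < p)
    (ω : ℂ → ℝ) (hω : IsWeight α ω) (hωB : InBBinfty α ω)
    (μ : Measure ℂ) (hμ : μ UHPᶜ = 0)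
    (Φ : ℝ → ℝ) (hΦ : IsNormalizedYoung Φ) (hΦp : InBp Φ p)
    (hK : (∫⁻ z, (Kmu α ω μ z) ^ (p / (p - q)) * ENNReal.ofReal (ω z) ∂(Vm α)) < ⊤) :
    ∃ C : ℝ, 0 < C ∧ ∀ β ∈ ({0, 1/3} : Set ℝ), ∀ f : ℂ → ℂ,
      Measurable f → HasCompactSupport f → lpInt α p ω f < ⊤ →
      (∫⁻ z, (dyadicMax β α Φ ω f z) ^ q ∂μ) ^ (1 / q)
        ≤ ENNReal.ofReal C * (lpInt α p ω f) ^ (1 / p) := by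
    classical
  open S16 in
  have hq0 : (0:ℝ) < q := lt_trans one_pos hq
  have hp0 : (0:ℝ) < p := lt_trans hq0 hqp
  have hpq0 : (0:ℝ) < p - q := by linarith
  set s : ℝ := p / (p - q) with hs
  have hs0 : 0 < s := div_pos hp0 hpq0
  have hconj : s.HolderConjugate (p/q) := by
    refine Real.holderConjugate_iff.mpr ⟨?_, ?_⟩
    · rw [hs]
      rw [lt_div_iff₀ hpq0]
      linarith
    · rw [hs]
      field_simp
      ring
  set ν : MeasureTheory.Measure ℂ :=
    (Vm α).withDensity (fun z => ENNReal.ofReal (ω z)) with hν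
  have hνlint : ∀ {g : ℂ → ℝ≥0∞}, Measurable g →
      ∫⁻ z, g z ∂ν = ∫⁻ z, ENNReal.ofReal (ω z) * g z ∂(Vm α) := by
    intro g hg
    rw [hν, lintegral_withDensity_eq_lintegral_mul _ (hω.1.ennreal_ofReal) hg]
    rfl
  have hνapp : ∀ E : Set ℂ, MeasurableSet E → ν E = wvol α ω E := by
    intro E hE
    rw [hν, withDensity_apply _ hE]
    rfl
  have hKm : Measurable (Kmu α ω μ) := measurable_Kmu
  -- constants
  set A : ℝ≥0∞ := ∫⁻ t in Set.Ioi (1:ℝ), ENNReal.ofReal (phiT Φ t / t^(p+1)) with hAdef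
  have hA : A < ⊤ := Aint_lt_top hΦ hp0 hΦp
  set Cq : ℝ≥0∞ := (1 - (2:ℝ≥0∞)^(-q))⁻¹ with hCq
  have hCqt : Cq ≠ ⊤ := Cgeom_ne_top hq0
  set CP : ℝ≥0∞ := (2:ℝ≥0∞)^p * ((2:ℝ≥0∞)^(2*p+1) * A) with hCP
  have hCPt : CP ≠ ⊤ :=
    ENNReal.mul_ne_top (two_rpow_ne_top p) (ENNReal.mul_ne_top (two_rpow_ne_top _) hA.ne)
  set KS : ℝ≥0∞ := ∫⁻ z, (Kmu α ω μ z) ^ s ∂ν with hKS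
  have hKsm : Measurable fun z => Kmu α ω μ z ^ s :=
    (ENNReal.continuous_rpow_const.measurable).comp hKm
  have hKSlt : KS < ⊤ := by
    rw [hKS, hνlint hKsm]
    calc (∫⁻ z, ENNReal.ofReal (ω z) * Kmu α ω μ z ^ s ∂(Vm α))
        = ∫⁻ z, Kmu α ω μ z ^ (p/(p-q)) * ENNReal.ofReal (ω z) ∂(Vm α) :=
          lintegral_congr fun z => mul_comm _ _
      _ < ⊤ := hK
  set Knorm : ℝ≥0∞ := KS ^ (1/s) with hKn
  have hKnt : Knorm ≠ ⊤ :=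
    ENNReal.rpow_ne_top_of_nonneg (by positivity) hKSlt.ne
  set Bc : ℝ≥0∞ := ((2:ℝ≥0∞)^q * Cq * Knorm * CP^(q/p)) ^ (1/q) with hBc
  have hBct : Bc ≠ ⊤ := by
    apply ENNReal.rpow_ne_top_of_nonneg (by positivity)
    exact ENNReal.mul_ne_top
      (ENNReal.mul_ne_top (ENNReal.mul_ne_top (two_rpow_ne_top q) hCqt) hKnt)
      (ENNReal.rpow_ne_top_of_nonneg (by positivity) hCPt)
  refine ⟨Bc.toReal + 1, by positivity, ?_⟩
  intro β hβm f hf hfc hlpf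
  have hβ : 3*β = 0 ∨ 3*β = 1 := by
    rcases hβm with h | h
    · left; rw [h]; ring
    · right
      rw [Set.mem_singleton_iff] at h
      rw [h]; norm_num
  set Mf := dyadicMax β α Φ ω f with hMfdef
  have hMfm : Measurable Mf := measurable_dyadicMax
  have hEk : ∀ k : ℤ, MeasurableSet {z : ℂ | edk k < Mf z} :=
    fun k => measurableSet_lt measurable_const hMfm
  -- Step B (μ-level sets controlled by K)
  have stepB : ∀ k : ℤ, μ {z : ℂ | edk k < Mf z} ≤
      ∫⁻ z in {z : ℂ | edk k < Mf z}, Kmu α ω μ z * ENNReal.ofReal (ω z) ∂(Vm α) := by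
    intro k
    rw [hMfdef, level_set_eq (edk k)]
    apply covering hβ _ μ (Vm α) _
    intro pr hpr
    obtain ⟨hWtop, hW0, -⟩ :=
      of_lt_luxNorm hω hΦ (two_zpow_pos k) (show ENNReal.ofReal ((2:ℝ)^k) < _ from hpr)
    exact mu_Qbox_le hω hW0 hWtop
  -- Step B' (ν-level sets controlled by the truncation integral)
  have stepB' : ∀ k : ℤ, ν {z : ℂ | edk k < Mf z} ≤
      ∫⁻ z, ENNReal.ofReal
        (Φ (‖if (2:ℝ)^(k-1) < ‖f z‖ then f z else 0‖ / 2^(k-1)) * ω z)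
          ∂(Vm α) := by
    intro k
    rw [hMfdef, level_set_eq (edk k)]
    refine le_trans (covering hβ _ ν (Vm α) _ ?_) (setLIntegral_le_lintegral _ _)
    intro pr hpr
    rw [hνapp (Qb β pr) (measurableSet_Qbox _ _)]
    have h2 : ENNReal.ofReal (2 * 2^(k-1)) < luxNorm α Φ ω (lep β pr.1 pr.2) (rep β pr.1 pr.2) f := by
      rw [← two_zpow_succ k]
      exact hpr
    exact (trunc_lt hω hΦ hf (two_zpow_pos (k-1)) h2).le
  have hMfq : Measurable fun z => Mf z ^ q :=
    (ENNReal.continuous_rpow_const.measurable).comp hMfm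
  have hKMfq : Measurable fun z => Kmu α ω μ z * Mf z ^ q := hKm.mul hMfq
  -- main estimate at exponent q
  have main_q : (∫⁻ z, Mf z ^ q ∂μ) ≤
      (2:ℝ≥0∞)^q * Cq * ∫⁻ z, Kmu α ω μ z * Mf z ^ q ∂ν := by
    have hKWm : Measurable fun z => Kmu α ω μ z * ENNReal.ofReal (ω z) :=
      hKm.mul hω.1.ennreal_ofReal
    calc (∫⁻ z, Mf z ^ q ∂μ)
        ≤ (2:ℝ≥0∞)^q * ∑' k : ℤ, edk k ^ q * μ {z : ℂ | edk k < Mf z} :=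
          lint_rpow_le μ Mf hq0 hEk
      _ ≤ (2:ℝ≥0∞)^q * ∑' k : ℤ, edk k ^ q *
            ∫⁻ z in {z : ℂ | edk k < Mf z}, Kmu α ω μ z * ENNReal.ofReal (ω z) ∂(Vm α) :=
          mul_le_mul_right (ENNReal.tsum_le_tsum fun k => mul_le_mul_right (stepB k) _) _
      _ = (2:ℝ≥0∞)^q * ∑' k : ℤ, ∫⁻ z, ({z : ℂ | edk k < Mf z}).indicator
            (fun z => edk k ^ q * (Kmu α ω μ z * ENNReal.ofReal (ω z))) z ∂(Vm α) := by
          congr 1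
          refine tsum_congr fun k => ?_
          rw [lintegral_indicator (hEk k)]
          rw [lintegral_const_mul _ hKWm]
      _ = (2:ℝ≥0∞)^q * ∫⁻ z, ∑' k : ℤ, ({z : ℂ | edk k < Mf z}).indicator
            (fun z => edk k ^ q * (Kmu α ω μ z * ENNReal.ofReal (ω z))) z ∂(Vm α) := by
          congr 1
          exact (lintegral_tsum fun k =>
            ((measurable_const.mul hKWm).indicator (hEk k)).aemeasurable).symm
      _ ≤ (2:ℝ≥0∞)^q * ∫⁻ z, Cq * Mf z ^ q *
            (Kmu α ω μ z * ENNReal.ofReal (ω z)) ∂(Vm α) := by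
          apply mul_le_mul_right
          apply lintegral_mono
          intro z
          dsimp only
          have hia : ∀ k : ℤ, ({z : ℂ | edk k < Mf z}).indicator
              (fun z => edk k ^ q * (Kmu α ω μ z * ENNReal.ofReal (ω z))) z =
              (if edk k < Mf z then edk k ^ q else 0) * (Kmu α ω μ z * ENNReal.ofReal (ω z)) := by
            intro k
            rw [Set.indicator_apply]
            by_cases hz : edk k < Mf z
            · rw [if_pos (show z ∈ {z : ℂ | edk k < Mf z} from hz), if_pos hz]
            · rw [if_neg (show z ∉ {z : ℂ | edk k < Mf z} from hz), if_neg hz, zero_mul]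
          rw [tsum_congr hia, ENNReal.tsum_mul_right]
          exact mul_le_mul_left (geom_upper hq0 (Mf z)) _
      _ = (2:ℝ≥0∞)^q * Cq * ∫⁻ z, Kmu α ω μ z * Mf z ^ q ∂ν := by
          rw [hνlint hKMfq]
          rw [show (∫⁻ z, Cq * Mf z ^ q * (Kmu α ω μ z * ENNReal.ofReal (ω z)) ∂(Vm α)) =
              ∫⁻ z, Cq * (ENNReal.ofReal (ω z) * (Kmu α ω μ z * Mf z ^ q)) ∂(Vm α) from
            lintegral_congr fun z => by ring]
          rw [lintegral_const_mul' _ _ hCqt]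
          ring
  -- Hölder
  have holder : (∫⁻ z, Kmu α ω μ z * Mf z ^ q ∂ν) ≤
      Knorm * (∫⁻ z, Mf z ^ p ∂ν) ^ (q/p) := by
    have h := ENNReal.lintegral_mul_le_Lp_mul_Lq ν hconj hKm.aemeasurable hMfq.aemeasurable
    simp only [Pi.mul_apply] at h
    calc (∫⁻ z, Kmu α ω μ z * Mf z ^ q ∂ν)
        ≤ (∫⁻ z, Kmu α ω μ z ^ s ∂ν) ^ (1/s) *
            (∫⁻ z, (Mf z ^ q) ^ (p/q) ∂ν) ^ (1/(p/q)) := h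
      _ = Knorm * (∫⁻ z, Mf z ^ p ∂ν) ^ (q/p) := by
          rw [hKn, hKS, one_div_div]
          have hzz : (∫⁻ z, (Mf z ^ q) ^ (p/q) ∂ν) = ∫⁻ z, Mf z ^ p ∂ν :=
            lintegral_congr fun z => by
              rw [← ENNReal.rpow_mul]
              congr 1
              rw [mul_comm, div_mul_cancel₀ p (ne_of_gt hq0)]
          rw [hzz, one_div_div]
  -- main estimate at exponent p (Pérez)
  have main_p : (∫⁻ z, Mf z ^ p ∂ν) ≤ CP * lpInt α p ω f := by
    calc (∫⁻ z, Mf z ^ p ∂ν)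
        ≤ (2:ℝ≥0∞)^p * ∑' k : ℤ, edk k ^ p * ν {z : ℂ | edk k < Mf z} :=
          lint_rpow_le ν Mf hp0 hEk
      _ ≤ (2:ℝ≥0∞)^p * ∑' k : ℤ, edk k ^ p * ∫⁻ z, ENNReal.ofReal
            (Φ (‖if (2:ℝ)^(k-1) < ‖f z‖ then f z else 0‖ / 2^(k-1)) * ω z)
              ∂(Vm α) :=
          mul_le_mul_right (ENNReal.tsum_le_tsum fun k => mul_le_mul_right (stepB' k) _) _
      _ = (2:ℝ≥0∞)^p * ∫⁻ z, ∑' k : ℤ, edk k ^ p * ENNReal.ofReal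
            (Φ (‖if (2:ℝ)^(k-1) < ‖f z‖ then f z else 0‖ / 2^(k-1)) * ω z)
              ∂(Vm α) := by
          congr 1
          have hGm : ∀ k : ℤ, Measurable fun z => ENNReal.ofReal
              (Φ (‖if (2:ℝ)^(k-1) < ‖f z‖ then f z else 0‖ / 2^(k-1)) * ω z) :=
            fun k => measurable_phi_integrand hω hΦ (Measurable.ite
              (measurableSet_lt measurable_const (continuous_norm.measurable.comp hf))
              hf measurable_const) (two_zpow_pos (k-1))
          rw [lintegral_tsum (fun k => ((hGm k).const_mul _).aemeasurable)]
          exact tsum_congr fun k => (lintegral_const_mul _ (hGm k)).symm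
      _ ≤ (2:ℝ≥0∞)^p * ∫⁻ z, (2:ℝ≥0∞)^(2*p+1) * A *
            (ENNReal.ofReal (‖f z‖) ^ p * ENNReal.ofReal (ω z)) ∂(Vm α) := by
          apply mul_le_mul_right
          apply lintegral_mono
          intro z
          have habs : ∀ k : ℤ, ‖if (2:ℝ)^(k-1) < ‖f z‖ then f z else 0‖ =
              (if (2:ℝ)^(k-1) < ‖f z‖ then ‖f z‖ else 0) := by
            intro k
            by_cases hc : (2:ℝ)^(k-1) < ‖f z‖
            · rw [if_pos hc, if_pos hc]
            · rw [if_neg hc, if_neg hc, norm_zero]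
          simp only [habs]
          exact phi_sum_le hΦ hp0 (‖f z‖) (ω z) (norm_nonneg _) (hω.2.1 z)
      _ = CP * lpInt α p ω f := by
          rw [lintegral_const_mul' _ _ (ENNReal.mul_ne_top (two_rpow_ne_top _) hA.ne)]
          rw [hCP, lpInt]
          ring
  -- combine everything
  have chain : (∫⁻ z, Mf z ^ q ∂μ) ≤
      ((2:ℝ≥0∞)^q * Cq * Knorm * CP^(q/p)) * (lpInt α p ω f) ^ (q/p) := by
    calc (∫⁻ z, Mf z ^ q ∂μ)
        ≤ (2:ℝ≥0∞)^q * Cq * ∫⁻ z, Kmu α ω μ z * Mf z ^ q ∂ν := main_q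
      _ ≤ (2:ℝ≥0∞)^q * Cq * (Knorm * (∫⁻ z, Mf z ^ p ∂ν) ^ (q/p)) :=
          mul_le_mul_right holder _
      _ ≤ (2:ℝ≥0∞)^q * Cq * (Knorm * (CP * lpInt α p ω f) ^ (q/p)) := by
          apply mul_le_mul_right
          apply mul_le_mul_right
          exact ENNReal.rpow_le_rpow main_p (by positivity)
      _ = ((2:ℝ≥0∞)^q * Cq * Knorm * CP^(q/p)) * (lpInt α p ω f) ^ (q/p) := by
          rw [ENNReal.mul_rpow_of_nonneg _ _ (by positivity : (0:ℝ) ≤ q/p)]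
          ring
  have final : (∫⁻ z, Mf z ^ q ∂μ) ^ (1/q) ≤ Bc * (lpInt α p ω f) ^ (1/p) := by
    calc (∫⁻ z, Mf z ^ q ∂μ) ^ (1/q)
        ≤ (((2:ℝ≥0∞)^q * Cq * Knorm * CP^(q/p)) * (lpInt α p ω f) ^ (q/p)) ^ (1/q) :=
          ENNReal.rpow_le_rpow chain (by positivity)
      _ = Bc * ((lpInt α p ω f) ^ (q/p)) ^ (1/q) := by
          rw [ENNReal.mul_rpow_of_nonneg _ _ (by positivity : (0:ℝ) ≤ 1/q), hBc]
      _ = Bc * (lpInt α p ω f) ^ (1/p) := by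
          congr 1
          rw [← ENNReal.rpow_mul]
          congr 1
          rw [div_mul_div_comm, mul_one, mul_comm p q, ← div_div,
            div_self (ne_of_gt hq0)]
  refine le_trans final ?_
  apply mul_le_mul_left
  calc Bc ≤ Bc + 1 := le_self_add
    _ = ENNReal.ofReal (Bc.toReal + 1) := by
        rw [ENNReal.ofReal_add ENNReal.toReal_nonneg zero_le_one,
          ENNReal.ofReal_toReal hBct, ENNReal.ofReal_one]
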